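/- arXiv:1211.4855 — 2 statements merged into one kernel-verified Lean document; each statement's English description precedes it below -/
import Mathlib

section
/- Let A and B be unital C*-algebras and let Φ : A → B be a surjective unital *-homomorphism (so that B is *-isomorphic to the quotient of A by the closed two-sided ideal ker Φ). Then d̂(B) ≤ d̂(A). -/
noncomputable section

open scoped ENNReal

/-- The (unique) C*-norm on matrices over a unital C*-algebra, described algebraically via
the spectral radius: `‖x‖ = √(r(xᴴ x))`. -/
def cstarMatNorm {A : Type*} [NormedRing A] [StarRing A] [NormedAlgebra ℂ A]
    {n : ℕ} (x : Matrix (Fin n) (Fin n) A) : ℝ :=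
  Real.sqrt (spectralRadius ℂ (x.conjTranspose * x)).toReal

/-- An algebra homomorphism between normed algebras is bounded. -/
def IsBddHom {A B : Type*} [NormedRing A] [NormedRing B] [NormedAlgebra ℂ A]
    [NormedAlgebra ℂ B] (ρ : A →ₐ[ℂ] B) : Prop :=
  ∃ c : ℝ, ∀ a : A, ‖ρ a‖ ≤ c * ‖a‖

/-- The operator norm `‖ρ‖` of a bounded algebra homomorphism. -/
def homNorm {A B : Type*} [NormedRing A] [NormedRing B] [NormedAlgebra ℂ A]
    [NormedAlgebra ℂ B] (ρ : A →ₐ[ℂ] B) : ℝ :=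
  sInf {c : ℝ | 0 ≤ c ∧ ∀ a : A, ‖ρ a‖ ≤ c * ‖a‖}

/-- `CBBddBy ρ c` means `‖ρ‖_cb ≤ c`, i.e. `‖ρ_n x‖ ≤ c * ‖x‖` for every `n` and every
`n × n` matrix `x` over the domain, where `ρ_n` is the entrywise application of `ρ`. -/
def CBBddBy {A B : Type*} [NormedRing A] [StarRing A] [NormedAlgebra ℂ A] [NormedRing B]
    [StarRing B] [NormedAlgebra ℂ B] (ρ : A →ₐ[ℂ] B) (c : ℝ) : Prop :=
  ∀ (n : ℕ) (x : Matrix (Fin n) (Fin n) A),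
    cstarMatNorm (ρ.mapMatrix x) ≤ c * cstarMatNorm x

/-- `PisierCondition A f` says: every bounded unital homomorphism `ρ` from `A` into the bounded
operators on some complex Hilbert space satisfies `‖ρ‖_cb ≤ f ‖ρ‖`. -/
def PisierCondition (A : Type*) [NormedRing A] [StarRing A] [NormedAlgebra ℂ A]
    (f : ℝ → ℝ) : Prop :=
  ∀ (H : Type) [NormedAddCommGroup H] [InnerProductSpace ℂ H] [CompleteSpace H]
    (ρ : A →ₐ[ℂ] (H →L[ℂ] H)), IsBddHom ρ → CBBddBy ρ (f (homNorm ρ))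

/-- The set of positive integers `d` such that there is `κ > 0` with
`‖ρ‖_cb ≤ κ ‖ρ‖ ^ d` for all bounded unital homomorphisms `ρ` of `A` into some `B(H)`. -/
def pisierSet (A : Type*) [NormedRing A] [StarRing A] [NormedAlgebra ℂ A] : Set ℕ :=
  {d : ℕ | 0 < d ∧ ∃ κ : ℝ, 0 < κ ∧ PisierCondition A fun r => κ * r ^ d}

/-- Pisier's similarity degree `d(A)` (equal to `∞` if no similarity bound exists). -/
def pisierDegree (A : Type*) [NormedRing A] [StarRing A] [NormedAlgebra ℂ A] : ℝ≥0∞ :=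
  ⨅ d ∈ pisierSet A, (d : ℝ≥0∞)

/-- The set of positive reals `γ ≥ d(A)` such that `‖ρ‖_cb ≤ γ ‖ρ‖ ^ γ` for every bounded
unital homomorphism `ρ` of `A` into some `B(H)`. -/
def hatdSet (A : Type*) [NormedRing A] [StarRing A] [NormedAlgebra ℂ A] : Set ℝ :=
  {γ : ℝ | 0 < γ ∧ pisierDegree A ≤ ENNReal.ofReal γ ∧
    PisierCondition A fun r => γ * r ^ γ}

/-- The modified similarity degree `d̂(A)`: the smallest positive `γ ≥ d(A)` such that
`‖ρ‖_cb ≤ γ ‖ρ‖ ^ γ` for all bounded unital homomorphisms of `A` into some `B(H)`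
(`∞` if there is none). -/
def hatd (A : Type*) [NormedRing A] [StarRing A] [NormedAlgebra ℂ A] : ℝ≥0∞ :=
  ⨅ γ ∈ hatdSet A, ENNReal.ofReal γ

/-- The strong operator topology on `B(H)`: the topology induced by the inclusion into
the space of all functions `H → H` with the topology of pointwise convergence. -/
def sot (H : Type*) [NormedAddCommGroup H] [InnerProductSpace ℂ H] :
    TopologicalSpace (H →L[ℂ] H) :=
  TopologicalSpace.induced (fun T : H →L[ℂ] H => (T : H → H)) Pi.topologicalSpace

/-- The weak operator topology on `B(H)`: the topology induced by the maps
`T ↦ ⟪T x, y⟫`. -/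
def wot (H : Type*) [NormedAddCommGroup H] [InnerProductSpace ℂ H] :
    TopologicalSpace (H →L[ℂ] H) :=
  TopologicalSpace.induced
    (fun T : H →L[ℂ] H => fun p : H × H => (inner ℂ (T p.1) p.2 : ℂ)) Pi.topologicalSpace

/-- `σ`, a homomorphism from a von Neumann algebra `M ⊆ B(H)` to `B(H')`, is continuous from
the strong operator topology to the strong operator topology on the closed unit ball of the
self-adjoint part `M^sa`. -/
def SOTContOnBall {H : Type*} [NormedAddCommGroup H] [InnerProductSpace ℂ H] [CompleteSpace H]
    (M : VonNeumannAlgebra H) {H' : Type*} [NormedAddCommGroup H'] [InnerProductSpace ℂ H']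
    [CompleteSpace H'] (σ : M.toStarSubalgebra →ₐ[ℂ] (H' →L[ℂ] H')) : Prop :=
  @ContinuousOn _ _ ((sot H).induced fun a : M.toStarSubalgebra => (a : H →L[ℂ] H)) (sot H')
    σ {a : M.toStarSubalgebra | IsSelfAdjoint ((a : H →L[ℂ] H)) ∧ ‖(a : H →L[ℂ] H)‖ ≤ 1}

/-- The set of positive reals `γ` such that `‖σ‖_cb ≤ γ ‖σ‖ ^ γ` for every bounded unital
homomorphism `σ` of the von Neumann algebra `M` into some `B(H')` that is SOT-SOT continuous
on the closed unit ball of `M^sa`. -/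
def hatdStarSet {H : Type*} [NormedAddCommGroup H] [InnerProductSpace ℂ H] [CompleteSpace H]
    (M : VonNeumannAlgebra H) : Set ℝ :=
  {γ : ℝ | 0 < γ ∧
    ∀ (H' : Type) [NormedAddCommGroup H'] [InnerProductSpace ℂ H'] [CompleteSpace H']
      (σ : M.toStarSubalgebra →ₐ[ℂ] (H' →L[ℂ] H')), IsBddHom σ → SOTContOnBall M σ →
        CBBddBy σ (γ * homNorm σ ^ γ)}

/-- The modified similarity degree `d̂_*(M)` of a von Neumann algebra `M ⊆ B(H)`. -/
def hatdStar {H : Type*} [NormedAddCommGroup H] [InnerProductSpace ℂ H] [CompleteSpace H]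
    (M : VonNeumannAlgebra H) : ℝ≥0∞ :=
  ⨅ γ ∈ hatdStarSet M, ENNReal.ofReal γ

/-- A tracial state on a unital complex *-algebra. -/
structure IsTracialState {A : Type*} [NormedRing A] [StarRing A] [NormedAlgebra ℂ A]
    (τ : A →ₗ[ℂ] ℂ) : Prop where
  pos : ∀ a : A, 0 ≤ (τ (star a * a)).re ∧ (τ (star a * a)).im = 0
  unit : τ 1 = 1
  tracial : ∀ a b : A, τ (a * b) = τ (b * a)

/-- `(π, ξ)` is a GNS representation for the state `τ`: `π` is a unital *-representation on a
Hilbert space `K`, `ξ` is a unit cyclic vector, and `τ a = ⟪π(a) ξ, ξ⟫` for all `a`. -/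
def IsGNSRep {A : Type*} [NormedRing A] [StarRing A] [NormedAlgebra ℂ A]
    {K : Type*} [NormedAddCommGroup K] [InnerProductSpace ℂ K] [CompleteSpace K]
    (τ : A →ₗ[ℂ] ℂ) (π : A →⋆ₐ[ℂ] (K →L[ℂ] K)) (ξ : K) : Prop :=
  ‖ξ‖ = 1 ∧ Dense ((Submodule.span ℂ (Set.range fun a : A => π a ξ) : Submodule ℂ K) : Set K) ∧
    ∀ a : A, τ a = (inner ℂ ξ (π a ξ) : ℂ)

/-- A subset of `B(K)` is a factor if the only elements commuting with all of it that also
belong to it are the scalar multiples of the identity. -/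
def IsFactorSet {K : Type*} [NormedAddCommGroup K] [InnerProductSpace ℂ K]
    (M : Set (K →L[ℂ] K)) : Prop :=
  ∀ x ∈ M ∩ Set.centralizer M, ∃ c : ℂ, x = c • (1 : K →L[ℂ] K)



/-! ### Auxiliary development for `modified_degree_of_quotient`.

We endow (a type synonym of) matrices over a C*-algebra with its C*-norm, coming from the
left-multiplication action on the Hilbert C*-module `Aⁿ`, prove that `cstarMatNorm` agrees
with this norm, establish the near-isometric lifting of matrices along a surjective
*-homomorphism via the continuous functional calculus, and deduce the comparison of the
modified similarity degrees. -/

open scoped InnerProductSpace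

set_option linter.unusedSectionVars false

namespace MDQ

variable {A : Type*} [CStarAlgebra A] [PartialOrder A] [StarOrderedRing A] {n : ℕ}

abbrev V (n : ℕ) (A : Type*) [CStarAlgebra A] [PartialOrder A] [StarOrderedRing A] :=
  WithCStarModule A (∀ _ : Fin n, A)

example : NormedAddCommGroup (V n A) := inferInstance
example : NormedSpace ℂ (V n A) := inferInstance
example : CStarModule A (V n A) := inferInstance

/-- matrix action as linear map -/
def Tl (x : Matrix (Fin n) (Fin n) A) : V n A →ₗ[ℂ] V n A where
  toFun v := (WithCStarModule.equiv _ _).symm (fun i => ∑ j, v j * star (x i j))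
  map_add' v w := by
    ext i
    simp [add_mul, Finset.sum_add_distrib]
  map_smul' c v := by
    ext i
    simp [mul_smul_comm, Finset.smul_sum]

lemma Tl_apply (x : Matrix (Fin n) (Fin n) A) (v : V n A) (i : Fin n) :
    Tl x v i = ∑ j, v j * star (x i j) := by
  simp [Tl]

lemma Tl_bound (x : Matrix (Fin n) (Fin n) A) (v : V n A) :
    ‖Tl x v‖ ≤ (∑ i, ∑ j, ‖x i j‖) * ‖v‖ := by
  calc ‖Tl x v‖ ≤ ∑ i, ‖Tl x v i‖ := WithCStarModule.pi_norm_le_sum_norm _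
    _ ≤ ∑ i, ∑ j, ‖x i j‖ * ‖v‖ := by
        refine Finset.sum_le_sum fun i _ => ?_
        rw [Tl_apply]
        refine (norm_sum_le _ _).trans (Finset.sum_le_sum fun j _ => ?_)
        rw [mul_comm (‖x i j‖)]
        exact (norm_mul_le _ _).trans (by
          rw [norm_star]
          exact mul_le_mul_of_nonneg_right (WithCStarModule.norm_apply_le_norm v j) (norm_nonneg _))
    _ = (∑ i, ∑ j, ‖x i j‖) * ‖v‖ := by rw [Finset.sum_mul]; simp [Finset.sum_mul]

/-- matrix action as continuous linear map -/
def T (x : Matrix (Fin n) (Fin n) A) : V n A →L[ℂ] V n A :=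
  LinearMap.mkContinuous (Tl x) _ (Tl_bound x)

lemma T_apply (x : Matrix (Fin n) (Fin n) A) (v : V n A) (i : Fin n) :
    T x v i = ∑ j, v j * star (x i j) := Tl_apply x v i

end MDQ

set_option linter.unusedSectionVars false
namespace MDQ
variable {A : Type*} [CStarAlgebra A] [PartialOrder A] [StarOrderedRing A] {n : ℕ}

lemma T_ext {S₁ S₂ : V n A →L[ℂ] V n A} (h : ∀ v i, S₁ v i = S₂ v i) : S₁ = S₂ := by
  ext v : 1
  exact (WithCStarModule.equiv _ _).injective (funext (h v))

lemma T_add (x y : Matrix (Fin n) (Fin n) A) : T (x + y) = T x + T y := by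
  refine T_ext fun v i => ?_
  simp [T_apply, Matrix.add_apply, mul_add, Finset.sum_add_distrib]

lemma T_neg (x : Matrix (Fin n) (Fin n) A) : T (-x) = -(T x) := by
  refine T_ext fun v i => ?_
  simp [T_apply, Matrix.neg_apply]

lemma T_zero : T (0 : Matrix (Fin n) (Fin n) A) = 0 := by
  refine T_ext fun v i => ?_
  simp [T_apply]

lemma T_smul (c : ℂ) (x : Matrix (Fin n) (Fin n) A) : T (c • x) = (starRingEnd ℂ c) • T x := by
  refine T_ext fun v i => ?_
  simp [T_apply, Matrix.smul_apply, Finset.smul_sum, star_smul, mul_smul_comm]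

lemma T_mul (x y : Matrix (Fin n) (Fin n) A) : T (x * y) = (T x).comp (T y) := by
  refine T_ext fun v i => ?_
  simp only [T_apply, ContinuousLinearMap.comp_apply, Matrix.mul_apply, T_apply]
  simp only [star_sum, star_mul, Finset.sum_mul, Finset.mul_sum, mul_assoc]
  exact Finset.sum_comm

lemma T_one : T (1 : Matrix (Fin n) (Fin n) A) = ContinuousLinearMap.id ℂ (V n A) := by
  refine T_ext fun v i => ?_
  simp [T_apply, Matrix.one_apply, apply_ite star, mul_ite, Finset.sum_ite_eq]
  exact (Finset.sum_ite_eq Finset.univ i (fun j => WithCStarModule.equiv _ _ v j)).trans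
    (if_pos (Finset.mem_univ i))

/-- basis vector -/
def dvec (j : Fin n) : V n A := (WithCStarModule.equiv _ _).symm (Pi.single j 1)

lemma T_dvec (x : Matrix (Fin n) (Fin n) A) (j i : Fin n) :
    T x (dvec j) i = star (x i j) := by
  classical
  rw [T_apply]
  rw [Finset.sum_eq_single j]
  · simp [dvec]
  · intro k _ hk
    simp [dvec, Pi.single_apply, hk]
  · simp

lemma norm_dvec_le (j : Fin n) : ‖(dvec j : V n A)‖ ≤ 1 := by
  have h1 : ‖(1 : A)‖ ≤ 1 := by
    have := CStarRing.norm_mul_self_le (1 : A)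
    rw [star_one, one_mul] at this
    nlinarith [norm_nonneg (1 : A)]
  calc ‖(dvec j : V n A)‖ = ‖(1 : A)‖ := WithCStarModule.norm_single j 1
    _ ≤ 1 := h1

lemma entry_norm_le (x : Matrix (Fin n) (Fin n) A) (i j : Fin n) :
    ‖x i j‖ ≤ ‖T x‖ := by
  calc ‖x i j‖ = ‖T x (dvec j) i‖ := by rw [T_dvec, norm_star]
    _ ≤ ‖T x (dvec j)‖ := WithCStarModule.norm_apply_le_norm _ i
    _ ≤ ‖T x‖ * ‖(dvec j : V n A)‖ := (T x).le_opNorm _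
    _ ≤ ‖T x‖ * 1 := by
        exact mul_le_mul_of_nonneg_left (norm_dvec_le j) (norm_nonneg (T x))
    _ = ‖T x‖ := mul_one _

lemma T_injective : Function.Injective (T : Matrix (Fin n) (Fin n) A → _) := by
  intro x y h
  ext i j
  have := T_dvec x j i
  rw [h, T_dvec] at this
  exact star_injective this.symm

lemma T_norm_le_sum (x : Matrix (Fin n) (Fin n) A) : ‖T x‖ ≤ ∑ i, ∑ j, ‖x i j‖ :=
  LinearMap.mkContinuous_norm_le _ (by positivity) _

lemma inner_T_left (x : Matrix (Fin n) (Fin n) A) (v w : V n A) :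
    ⟪T x v, w⟫_A = ⟪v, T (star x) w⟫_A := by
  simp only [WithCStarModule.pi_inner, T_apply, WithCStarModule.inner_def]
  simp only [star_sum, star_mul, star_star, Matrix.star_apply, Finset.sum_mul, Finset.mul_sum,
    mul_assoc]
  exact Finset.sum_comm

end MDQ

/-- Type synonym for matrices over a C*-algebra, to be equipped with the C*-norm. -/
def MatC (n : ℕ) (A : Type*) : Type _ := Matrix (Fin n) (Fin n) A

set_option linter.unusedSectionVars false
namespace MDQ
variable {A : Type*} [CStarAlgebra A] [PartialOrder A] [StarOrderedRing A] {n : ℕ}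

namespace MC

/-- identification -/
def mk {n : ℕ} {A : Type*} (x : Matrix (Fin n) (Fin n) A) : MatC n A := x

def unmk {n : ℕ} {A : Type*} (x : MatC n A) : Matrix (Fin n) (Fin n) A := x

end MC

instance : Ring (MatC n A) := inferInstanceAs (Ring (Matrix (Fin n) (Fin n) A))
instance : StarRing (MatC n A) := inferInstanceAs (StarRing (Matrix (Fin n) (Fin n) A))
instance : Algebra ℂ (MatC n A) := inferInstanceAs (Algebra ℂ (Matrix (Fin n) (Fin n) A))
instance : StarModule ℂ (MatC n A) :=
  inferInstanceAs (StarModule ℂ (Matrix (Fin n) (Fin n) A))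

namespace MC
open MDQ

lemma unmk_mul (x y : MatC n A) : unmk (x * y) = unmk x * unmk y := rfl
lemma unmk_add (x y : MatC n A) : unmk (x + y) = unmk x + unmk y := rfl
lemma unmk_neg (x : MatC n A) : unmk (-x) = -unmk x := rfl
lemma unmk_zero : unmk (0 : MatC n A) = 0 := rfl
lemma unmk_one : unmk (1 : MatC n A) = 1 := rfl
lemma unmk_star (x : MatC n A) : unmk (star x) = star (unmk x) := rfl
lemma unmk_smul (c : ℂ) (x : MatC n A) : unmk (c • x) = c • unmk x := rfl
lemma unmk_mk (x : Matrix (Fin n) (Fin n) A) : unmk (mk x) = x := rfl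
lemma mk_unmk (x : MatC n A) : mk (unmk x) = x := rfl

end MC

open MC

noncomputable instance : NormedAddCommGroup (MatC n A) :=
  AddGroupNorm.toNormedAddCommGroup
    { toFun := fun x => ‖T (unmk x)‖
      map_zero' := by
        show ‖T (unmk (0 : MatC n A))‖ = 0
        rw [unmk_zero, T_zero]; exact ContinuousLinearMap.opNorm_zero
      add_le' := fun x y => by
        show ‖T (unmk (x + y))‖ ≤ ‖T (unmk x)‖ + ‖T (unmk y)‖
        rw [unmk_add, T_add]; exact ContinuousLinearMap.opNorm_add_le _ _
      neg' := fun x => by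
        show ‖T (unmk (-x))‖ = ‖T (unmk x)‖
        rw [unmk_neg, T_neg]; exact ContinuousLinearMap.opNorm_neg _
      eq_zero_of_map_eq_zero' := fun x hx => by
        have : T (unmk x) = 0 := (ContinuousLinearMap.opNorm_zero_iff _).mp hx
        have := T_injective (A := A) (n := n) (by rw [this, T_zero] : T (unmk x) = T 0)
        calc x = mk (unmk x) := rfl
          _ = mk 0 := by rw [this]
          _ = 0 := rfl }

lemma MC.norm_def (x : MatC n A) : ‖x‖ = ‖T (unmk x)‖ := rfl

noncomputable instance : NormedRing (MatC n A) :=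
  { (inferInstance : NormedAddCommGroup (MatC n A)),
    (inferInstance : Ring (MatC n A)) with
    norm_mul_le := fun x y => by
      rw [MC.norm_def, MC.norm_def, MC.norm_def, unmk_mul, T_mul]
      exact ContinuousLinearMap.opNorm_comp_le _ _ }

noncomputable instance : NormedAlgebra ℂ (MatC n A) :=
  { (inferInstance : Algebra ℂ (MatC n A)) with
    norm_smul_le := fun c x => by
      rw [MC.norm_def, MC.norm_def, unmk_smul, T_smul]
      exact (ContinuousLinearMap.opNorm_smul_le _ (T (unmk x))).trans_eq (by simp) }

variable {A : Type*} [CStarAlgebra A] [PartialOrder A] [StarOrderedRing A] {n : ℕ}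
open MC

instance : CStarRing (MatC n A) where
  norm_mul_self_le x := by
    have key : ∀ v : V n A, ‖T (unmk x) v‖ ≤
        Real.sqrt ‖T (unmk (star x * x))‖ * ‖v‖ := by
      intro v
      have h1 : ‖T (unmk x) v‖ ^ 2 = ‖⟪T (unmk x) v, T (unmk x) v⟫_A‖ :=
        CStarModule.norm_sq_eq A
      have h2 : ⟪T (unmk x) v, T (unmk x) v⟫_A = ⟪v, T (unmk (star x * x)) v⟫_A := by
        rw [inner_T_left, unmk_mul, unmk_star, T_mul]
        rfl
      have h3 : ‖⟪v, T (unmk (star x * x)) v⟫_A‖ ≤ ‖v‖ * (‖T (unmk (star x * x))‖ * ‖v‖) :=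
        CStarModule.norm_inner_le (V n A) |>.trans
          (mul_le_mul_of_nonneg_left ((T _).le_opNorm v) (norm_nonneg v))
      have h4 : ‖T (unmk x) v‖ ^ 2 ≤ ‖T (unmk (star x * x))‖ * ‖v‖ ^ 2 := by
        rw [h1, h2]; nlinarith [h3]
      have h5 : (0:ℝ) ≤ ‖T (unmk (star x * x))‖ := ContinuousLinearMap.opNorm_nonneg _
      calc ‖T (unmk x) v‖ = Real.sqrt (‖T (unmk x) v‖ ^ 2) := by
            rw [Real.sqrt_sq (norm_nonneg _)]
        _ ≤ Real.sqrt (‖T (unmk (star x * x))‖ * ‖v‖ ^ 2) := Real.sqrt_le_sqrt h4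
        _ = Real.sqrt ‖T (unmk (star x * x))‖ * ‖v‖ := by
            rw [Real.sqrt_mul h5, Real.sqrt_sq (norm_nonneg v)]
    have hop : ‖T (unmk x)‖ ≤ Real.sqrt ‖T (unmk (star x * x))‖ :=
      ContinuousLinearMap.opNorm_le_bound _ (Real.sqrt_nonneg _) key
    show ‖x‖ * ‖x‖ ≤ ‖star x * x‖
    rw [MC.norm_def, MC.norm_def]
    nlinarith [Real.sq_sqrt (ContinuousLinearMap.opNorm_nonneg (T (unmk (star x * x)))), hop,
      ContinuousLinearMap.opNorm_nonneg (T (unmk x)),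
      Real.sqrt_nonneg ‖T (unmk (star x * x))‖]

lemma MC.norm_le_sum (x : MatC n A) : ‖x‖ ≤ ∑ i, ∑ j, ‖unmk x i j‖ :=
  T_norm_le_sum (unmk x)

lemma MC.entry_le_norm (x : MatC n A) (i j : Fin n) : ‖unmk x i j‖ ≤ ‖x‖ :=
  entry_norm_le (unmk x) i j

instance : CompleteSpace (MatC n A) := by
  refine Metric.complete_of_cauchySeq_tendsto fun u hu => ?_
  have hdist : ∀ i j k l, dist (unmk (u k) i j) (unmk (u l) i j) ≤ dist (u k) (u l) := by
    intro i j k l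
    rw [dist_eq_norm, dist_eq_norm]
    exact MC.entry_le_norm (u k - u l) i j
  have hent : ∀ i j, ∃ L, Filter.Tendsto (fun k => unmk (u k) i j) Filter.atTop (nhds L) := by
    intro i j
    refine cauchySeq_tendsto_of_complete ?_
    rw [Metric.cauchySeq_iff]
    intro ε hε
    obtain ⟨N, hN⟩ := Metric.cauchySeq_iff.mp hu ε hε
    exact ⟨N, fun k hk l hl => lt_of_le_of_lt (hdist i j k l) (hN k hk l hl)⟩
  choose L hL using hent
  refine ⟨mk (Matrix.of L), ?_⟩
  rw [tendsto_iff_dist_tendsto_zero]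
  have hb : ∀ k, dist (u k) (mk (Matrix.of L)) ≤ ∑ i, ∑ j, ‖unmk (u k) i j - L i j‖ := by
    intro k
    rw [dist_eq_norm]
    exact MC.norm_le_sum (u k - mk (Matrix.of L))
  refine squeeze_zero (fun k => dist_nonneg) hb ?_
  have hten : ∀ i j, Filter.Tendsto (fun k => ‖unmk (u k) i j - L i j‖) Filter.atTop (nhds 0) := by
    intro i j
    rw [← tendsto_iff_norm_sub_tendsto_zero]
    exact hL i j
  have h2 := tendsto_finset_sum (f := fun i k => ∑ j, ‖unmk (u k) i j - L i j‖)
    Finset.univ (fun i (_ : i ∈ Finset.univ) => by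
      have h3 := tendsto_finset_sum (f := fun j k => ‖unmk (u k) i j - L i j‖)
        Finset.univ (fun j _ => hten i j)
      rwa [Finset.sum_const_zero] at h3)
  rwa [Finset.sum_const_zero] at h2

end MDQ

namespace MDQ
variable {A : Type*} [CStarAlgebra A] [PartialOrder A] [StarOrderedRing A] {n : ℕ}
open MC

noncomputable instance : CStarAlgebra (MatC n A) where

lemma spectrum_unmk (x : MatC n A) : spectrum ℂ (unmk x) = spectrum ℂ x := rfl

lemma cstarMatNorm_eq (x : MatC n A) : cstarMatNorm (unmk x) = ‖x‖ := by
  have h1 : (unmk x).conjTranspose * unmk x = unmk (star x * x) := rfl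
  have h2 : spectralRadius ℂ ((unmk x).conjTranspose * unmk x)
      = spectralRadius ℂ (star x * x) := rfl
  have h3 : IsSelfAdjoint (star x * x) := IsSelfAdjoint.star_mul_self x
  rw [cstarMatNorm, h2, h3.spectralRadius_eq_nnnorm]
  rw [ENNReal.coe_toReal]
  have h4 : (‖star x * x‖₊ : ℝ) = ‖star x * x‖ := rfl
  rw [h4, CStarRing.norm_star_mul_self]
  exact Real.sqrt_mul_self (norm_nonneg x)

end MDQ

namespace MDQ

section Lift
variable {A' B' : Type*} [CStarAlgebra A'] [CStarAlgebra B']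

lemma starAlgHom_continuous (φ : A' →⋆ₐ[ℂ] B') : Continuous φ :=
  AddMonoidHomClass.continuous_of_bound φ 1 fun a => by
    simpa using NonUnitalStarAlgHom.norm_apply_le φ a

set_option maxHeartbeats 1000000 in
/-- Near-isometric lifting along a surjective *-homomorphism of unital C*-algebras. -/
lemma exists_norm_lift (φ : A' →⋆ₐ[ℂ] B') (hφ : Function.Surjective φ)
    (b : B') {ε : ℝ} (hε : 0 < ε) : ∃ a : A', φ a = b ∧ ‖a‖ ≤ ‖b‖ + ε := by
  obtain ⟨a₀, ha₀⟩ := hφ b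
  set t : ℝ := ‖b‖ + ε with ht_def
  have ht : 0 < t := by positivity
  set w : A' := star a₀ * a₀ with hw_def
  have hw : IsSelfAdjoint w := IsSelfAdjoint.star_mul_self a₀
  set g : ℝ → ℝ := fun s => t / Real.sqrt (max s (t ^ 2)) with hg_def
  have hmaxpos : ∀ s : ℝ, 0 < max s (t ^ 2) := fun s =>
    lt_of_lt_of_le (by positivity) (le_max_right _ _)
  have hgcont : Continuous g := by
    refine continuous_const.div ?_ ?_
    · exact Real.continuous_sqrt.comp (continuous_id.max continuous_const)
    · intro s
      exact ne_of_gt (Real.sqrt_pos.mpr (hmaxpos s))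
  have hgnonneg : ∀ s, 0 ≤ g s := fun s => by
    have := Real.sqrt_nonneg (max s (t ^ 2))
    positivity
  -- elementary bound : g s * (s * g s) ≤ t ^ 2 for 0 ≤ s
  have hkey : ∀ s : ℝ, 0 ≤ s → g s * (s * g s) ≤ t ^ 2 := by
    intro s hs
    have hm : Real.sqrt (max s (t ^ 2)) * Real.sqrt (max s (t ^ 2)) = max s (t ^ 2) :=
      Real.mul_self_sqrt (le_of_lt (hmaxpos s))
    have hmax : s ≤ max s (t ^ 2) := le_max_left _ _
    have hsq : Real.sqrt (max s (t ^ 2)) ≠ 0 := ne_of_gt (Real.sqrt_pos.mpr (hmaxpos s))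
    have e : g s * (s * g s) = t * t * s / (max s (t ^ 2)) := by
      rw [hg_def]
      simp only
      rw [← hm]
      field_simp
      rw [Real.sq_sqrt (sq_nonneg _)]
    rw [e, div_le_iff₀ (hmaxpos s)]
    nlinarith [sq_nonneg t, ht.le, hs, hmax]
  -- g equals 1 on the spectrum of star b * b
  have hspec1 : ∀ s ∈ spectrum ℝ (star b * b), g s = 1 := by
    intro s hs
    rcases subsingleton_or_nontrivial B' with hB | hB
    · rw [spectrum.mem_iff] at hs
      exact (hs (isUnit_of_subsingleton _)).elim
    · have hs1 : s ≤ ‖star b * b‖ := by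
        have h := spectrum.norm_le_norm_of_mem hs
        calc s ≤ |s| := le_abs_self s
          _ = ‖s‖ := rfl
          _ ≤ ‖star b * b‖ := h
      have hs2 : s ≤ t ^ 2 := by
        rw [CStarRing.norm_star_mul_self] at hs1
        nlinarith [norm_nonneg b]
      have hmx : max s (t ^ 2) = t ^ 2 := max_eq_right hs2
      rw [hg_def]
      simp only [hmx]
      rw [Real.sqrt_sq ht.le, div_self (ne_of_gt ht)]
  have hbsa : IsSelfAdjoint (star b * b) := IsSelfAdjoint.star_mul_self b
  refine ⟨a₀ * cfc g w, ?_, ?_⟩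
  · have hmap : φ (cfc g w) = cfc g (φ w) :=
      StarAlgHom.map_cfc φ g w (hf := hgcont.continuousOn)
        (hφ := starAlgHom_continuous φ) (ha := hw) (hφa := hw.map φ)
    have hφw : φ w = star b * b := by
      rw [hw_def, map_mul, map_star, ha₀]
    rw [map_mul, ha₀, hmap, hφw]
    have hone : cfc g (star b * b) = 1 := by
      rw [cfc_congr (fun s hs => hspec1 s hs), cfc_const (1 : ℝ) (star b * b) hbsa]
      simp
    rw [hone, mul_one]
  · set a : A' := a₀ * cfc g w with ha_def
    have hgsa : IsSelfAdjoint (cfc g w) := cfc_predicate g w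
    have m2 : cfc (fun s => s * g s) w = w * cfc g w := by
      rw [cfc_mul (fun s : ℝ => s) g w continuousOn_id hgcont.continuousOn,
        cfc_id' ℝ w hw]
    have m1 : cfc (fun s => g s * (s * g s)) w = cfc g w * (w * cfc g w) := by
      rw [cfc_mul g (fun s => s * g s) w hgcont.continuousOn
        ((continuous_id.mul hgcont).continuousOn), m2]
    have hsq : star a * a = cfc (fun s => g s * (s * g s)) w := by
      have e1 : star a * a = cfc g w * (w * cfc g w) := by
        calc star a * a = cfc g w * star a₀ * (a₀ * cfc g w) := by
              rw [ha_def, star_mul, hgsa.star_eq]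
          _ = cfc g w * (w * cfc g w) := by
              rw [hw_def, mul_assoc, ← mul_assoc (star a₀)]
      rw [e1, m1]
    have hnorm : ‖star a * a‖ ≤ t ^ 2 := by
      rw [hsq]
      refine norm_cfc_le (by positivity) fun s hs => ?_
      have hs0 : 0 ≤ s := spectrum_star_mul_self_nonneg s hs
      rw [Real.norm_eq_abs, abs_of_nonneg (by
        have h5 := hgnonneg s
        positivity)]
      exact hkey s hs0
    have h6 := CStarRing.norm_star_mul_self (x := a)
    nlinarith [norm_nonneg a, h6, ht]

end Lift
end MDQ

namespace MDQ
section MatLift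

variable {A B : Type*} [CStarAlgebra A] [PartialOrder A] [StarOrderedRing A]
  [CStarAlgebra B] [PartialOrder B] [StarOrderedRing B] {n : ℕ}

open MC

/-- The induced *-homomorphism on C*-matrix algebras. -/
def matHom (Φ : A →⋆ₐ[ℂ] B) : MatC n A →⋆ₐ[ℂ] MatC n B where
  toFun x := mk (Φ.toAlgHom.mapMatrix (unmk x))
  map_one' := congrArg mk (map_one Φ.toAlgHom.mapMatrix)
  map_mul' x y := congrArg mk (map_mul Φ.toAlgHom.mapMatrix (unmk x) (unmk y))
  map_zero' := congrArg mk (map_zero Φ.toAlgHom.mapMatrix)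
  map_add' x y := congrArg mk (map_add Φ.toAlgHom.mapMatrix (unmk x) (unmk y))
  commutes' c := congrArg mk (Φ.toAlgHom.mapMatrix.commutes c)
  map_star' x := by
    refine congrArg mk ?_
    show (unmk x).conjTranspose.map Φ = ((unmk x).map Φ).conjTranspose
    ext i j
    simp [Matrix.conjTranspose_apply, map_star]

lemma matHom_apply (Φ : A →⋆ₐ[ℂ] B) (x : MatC n A) (i j : Fin n) :
    unmk ((matHom Φ) x) i j = Φ (unmk x i j) := rfl

lemma matHom_surjective (Φ : A →⋆ₐ[ℂ] B) (hΦ : Function.Surjective Φ) :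
    Function.Surjective (matHom (n := n) Φ) := by
  intro y
  refine ⟨mk (Matrix.of fun i j => Function.surjInv hΦ (unmk y i j)), ?_⟩
  have : ∀ i j, unmk ((matHom Φ) (mk (Matrix.of fun i j => Function.surjInv hΦ (unmk y i j)))) i j
      = unmk y i j := by
    intro i j
    rw [matHom_apply]
    exact Function.surjInv_eq hΦ _
  calc (matHom Φ) (mk (Matrix.of fun i j => Function.surjInv hΦ (unmk y i j)))
      = mk (unmk ((matHom Φ) (mk (Matrix.of fun i j => Function.surjInv hΦ (unmk y i j))))) := rfl
    _ = mk (unmk y) := by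
        refine congrArg mk ?_
        ext i j
        exact this i j
    _ = y := rfl

/-- Near-isometric lifting of matrices over C*-algebras, in `cstarMatNorm` terms. -/
lemma exists_matrix_lift (Φ : A →⋆ₐ[ℂ] B) (hΦ : Function.Surjective Φ)
    (y : Matrix (Fin n) (Fin n) B) {ε : ℝ} (hε : 0 < ε) :
    ∃ x : Matrix (Fin n) (Fin n) A, x.map Φ = y ∧
      cstarMatNorm x ≤ cstarMatNorm y + ε := by
  obtain ⟨x, hx, hnx⟩ := exists_norm_lift (matHom (n := n) Φ)
    (matHom_surjective Φ hΦ) (mk y) hε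
  refine ⟨unmk x, ?_, ?_⟩
  · have : unmk ((matHom Φ) x) = unmk (mk y) := congrArg unmk hx
    exact this
  · rw [cstarMatNorm_eq x]
    calc ‖x‖ ≤ ‖mk y‖ + ε := hnx
      _ = cstarMatNorm y + ε := by rw [← cstarMatNorm_eq (mk y)]; rfl

end MatLift
end MDQ


namespace MDQ
section Plumbing

variable {A B : Type*}
    [NormedRing A] [StarRing A] [CStarRing A] [NormedAlgebra ℂ A] [StarModule ℂ A]
    [CompleteSpace A]
    [NormedRing B] [StarRing B] [CStarRing B] [NormedAlgebra ℂ B] [StarModule ℂ B]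
    [CompleteSpace B]

lemma cstarMatNorm_nonneg {n : ℕ} (x : Matrix (Fin n) (Fin n) A) :
    0 ≤ cstarMatNorm x := Real.sqrt_nonneg _

lemma homNorm_nonneg {H : Type} [NormedAddCommGroup H] [InnerProductSpace ℂ H]
    [CompleteSpace H] (ρ : A →ₐ[ℂ] (H →L[ℂ] H)) : 0 ≤ homNorm ρ :=
  Real.sInf_nonneg fun _ hx => hx.1

lemma pisier_transfer (Φ : A →⋆ₐ[ℂ] B) (hΦ : Function.Surjective Φ) {f : ℝ → ℝ}
    (hf0 : ∀ r : ℝ, 0 ≤ r → 0 ≤ f r)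
    (hfm : ∀ s t : ℝ, 0 ≤ s → s ≤ t → f s ≤ f t)
    (hA : PisierCondition A f) : PisierCondition B f := by
  letI : CStarAlgebra A := {}
  letI : CStarAlgebra B := {}
  letI : PartialOrder A := CStarAlgebra.spectralOrder A
  letI : StarOrderedRing A := CStarAlgebra.spectralOrderedRing A
  letI : PartialOrder B := CStarAlgebra.spectralOrder B
  letI : StarOrderedRing B := CStarAlgebra.spectralOrderedRing B
  intro H _ _ _ ρ hρ
  obtain ⟨c, hc⟩ := hρ
  have hΦle : ∀ a : A, ‖Φ a‖ ≤ ‖a‖ := fun a => NonUnitalStarAlgHom.norm_apply_le Φ a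
  set ρ' : A →ₐ[ℂ] (H →L[ℂ] H) := ρ.comp Φ.toAlgHom with hρ'_def
  have hρ'app : ∀ a : A, ρ' a = ρ (Φ a) := fun a => rfl
  have hρ'bdd : IsBddHom ρ' := by
    refine ⟨max c 0, fun a => ?_⟩
    calc ‖ρ' a‖ = ‖ρ (Φ a)‖ := by rw [hρ'app]
      _ ≤ c * ‖Φ a‖ := hc (Φ a)
      _ ≤ max c 0 * ‖Φ a‖ := mul_le_mul_of_nonneg_right (le_max_left _ _) (norm_nonneg _)
      _ ≤ max c 0 * ‖a‖ := mul_le_mul_of_nonneg_left (hΦle a) (le_max_right _ _)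
  have hmono : homNorm ρ' ≤ homNorm ρ := by
    refine csInf_le_csInf ⟨0, fun x hx => hx.1⟩ ?_ ?_
    · exact ⟨max c 0, le_max_right _ _, fun b => (hc b).trans
        (mul_le_mul_of_nonneg_right (le_max_left _ _) (norm_nonneg _))⟩
    · rintro d ⟨hd0, hd⟩
      refine ⟨hd0, fun a => ?_⟩
      calc ‖ρ' a‖ = ‖ρ (Φ a)‖ := by rw [hρ'app]
        _ ≤ d * ‖Φ a‖ := hd (Φ a)
        _ ≤ d * ‖a‖ := mul_le_mul_of_nonneg_left (hΦle a) hd0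
  have key := hA H ρ' hρ'bdd
  intro n y
  set κ := f (homNorm ρ) with hκ_def
  have hκ0 : 0 ≤ κ := hf0 _ (homNorm_nonneg ρ)
  have hf' : f (homNorm ρ') ≤ κ := hfm _ _ (homNorm_nonneg ρ') hmono
  refine le_of_forall_pos_le_add fun δ hδ => ?_
  have hε : (0:ℝ) < δ / (κ + 1) := by positivity
  obtain ⟨x, hxy, hxn⟩ := exists_matrix_lift Φ hΦ y hε
  have hmm : ρ'.mapMatrix x = ρ.mapMatrix y := by
    rw [← hxy]
    ext i j
    simp [AlgHom.mapMatrix_apply, Matrix.map_apply, hρ'app]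
  calc cstarMatNorm (ρ.mapMatrix y) = cstarMatNorm (ρ'.mapMatrix x) := by rw [hmm]
    _ ≤ f (homNorm ρ') * cstarMatNorm x := key n x
    _ ≤ κ * cstarMatNorm x := mul_le_mul_of_nonneg_right hf' (cstarMatNorm_nonneg x)
    _ ≤ κ * (cstarMatNorm y + δ / (κ + 1)) :=
        mul_le_mul_of_nonneg_left hxn hκ0
    _ ≤ κ * cstarMatNorm y + δ := by
        have h1 : κ * (δ / (κ + 1)) ≤ δ := by
          rw [mul_div_assoc']
          rw [div_le_iff₀ (by positivity)]
          nlinarith [hδ.le, hκ0]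
        nlinarith [h1]

lemma pisierDegree_le (Φ : A →⋆ₐ[ℂ] B) (hΦ : Function.Surjective Φ) :
    pisierDegree B ≤ pisierDegree A := by
  refine le_iInf₂ fun d hd => ?_
  obtain ⟨hd0, κ, hκ0, hκ⟩ := hd
  refine iInf₂_le d ⟨hd0, κ, hκ0, ?_⟩
  refine pisier_transfer Φ hΦ (fun r hr => by positivity)
    (fun s t hs hst => ?_) hκ
  exact mul_le_mul_of_nonneg_left (pow_le_pow_left₀ hs hst d) hκ0.le

theorem modified_degree_of_quotient' (Φ : A →⋆ₐ[ℂ] B) (hΦ : Function.Surjective Φ) :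
    hatd B ≤ hatd A := by
  refine le_iInf₂ fun γ hγ => ?_
  obtain ⟨hγ0, hγdeg, hγpc⟩ := hγ
  refine iInf₂_le γ ⟨hγ0, (pisierDegree_le Φ hΦ).trans hγdeg, ?_⟩
  refine pisier_transfer Φ hΦ (fun r hr => ?_) (fun s t hs hst => ?_) hγpc
  · have := Real.rpow_nonneg hr γ
    positivity
  · exact mul_le_mul_of_nonneg_left (Real.rpow_le_rpow hs hst hγ0.le) hγ0.le

end Plumbing
end MDQ

/-- If `Φ : A → B` is a surjective unital *-homomorphism between unital
C*-algebras, then `d̂(B) ≤ d̂(A)`. -/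
theorem modified_degree_of_quotient {A B : Type*}
    [NormedRing A] [StarRing A] [CStarRing A] [NormedAlgebra ℂ A] [StarModule ℂ A]
    [CompleteSpace A]
    [NormedRing B] [StarRing B] [CStarRing B] [NormedAlgebra ℂ B] [StarModule ℂ B]
    [CompleteSpace B]
    (Φ : A →⋆ₐ[ℂ] B) (hΦ : Function.Surjective Φ) :
    hatd B ≤ hatd A :=
  MDQ.modified_degree_of_quotient' Φ hΦ

end
end

section
/- Let n ≥ 2 and let 𝔾_n be the subgroup of the group of n×n unitary complex matrices generated by the diagonal unitary matrices together with the permutation matrices. If h ∈ 𝔾_n has infinite order, then h^{n!} is a diagonal unitary matrix diag(λ_1, …, λ_n) with h^{n!} ≠ I_n, h^{n!} has infinite order, and there exists an index j₀ ∈ {1, …, n} such that λ_{j₀} is not a root of unity. -/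
noncomputable section

open scoped ENNReal

/-- The subgroup `𝔾ₙ` of the `n × n` unitary group generated by the diagonal unitary
matrices together with the permutation matrices. -/
def Gn (n : ℕ) : Subgroup (Matrix.unitaryGroup (Fin n) ℂ) :=
  Subgroup.closure
    ({g | ∃ d : Fin n → ℂ, (g : Matrix (Fin n) (Fin n) ℂ) = Matrix.diagonal d} ∪
      {g | ∃ σ : Equiv.Perm (Fin n), (g : Matrix (Fin n) (Fin n) ℂ) = σ.permMatrix ℂ})

lemma perm_mul_diag' {n : ℕ} (σ : Equiv.Perm (Fin n)) (d : Fin n → ℂ) :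
    (σ.permMatrix ℂ) * Matrix.diagonal d = Matrix.diagonal (d ∘ σ) * σ.permMatrix ℂ := by
  rw [Equiv.Perm.permMatrix, PEquiv.toMatrix_toPEquiv_mul, PEquiv.mul_toMatrix_toPEquiv]
  ext i j
  by_cases hij : σ i = j
  · subst hij; simp [Matrix.diagonal]
  · simp [Matrix.diagonal, hij, show i ≠ σ.symm j from fun h => hij (by simp [h])]

lemma perm_mul_perm' {n : ℕ} (σ τ : Equiv.Perm (Fin n)) :
    (σ.permMatrix ℂ) * (τ.permMatrix ℂ) = (τ * σ).permMatrix ℂ := by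
  show _ = ((τ * σ).toPEquiv).toMatrix
  rw [show τ * σ = σ.trans τ from rfl, Equiv.toPEquiv_trans, PEquiv.toMatrix_trans]

lemma perm_one' {n : ℕ} : ((1 : Equiv.Perm (Fin n)).permMatrix ℂ) = 1 := by
  show ((1 : Equiv.Perm (Fin n)).toPEquiv).toMatrix = 1
  rw [show (1 : Equiv.Perm (Fin n)) = Equiv.refl (Fin n) from rfl, Equiv.toPEquiv_refl,
    PEquiv.toMatrix_refl]

lemma perm_conjTranspose' {n : ℕ} (σ : Equiv.Perm (Fin n)) :
    (σ.permMatrix ℂ).conjTranspose = (σ⁻¹).permMatrix ℂ := by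
  show _ = ((σ⁻¹).toPEquiv).toMatrix
  rw [show σ⁻¹ = σ.symm from rfl, Equiv.toPEquiv_symm, PEquiv.toMatrix_symm]
  ext i j
  simp [Matrix.conjTranspose_apply, PEquiv.toMatrix_apply]

lemma Gn_form {n : ℕ} (h : Matrix.unitaryGroup (Fin n) ℂ) (hG : h ∈ Gn n) :
    ∃ (d : Fin n → ℂ) (σ : Equiv.Perm (Fin n)),
      (h : Matrix (Fin n) (Fin n) ℂ) = Matrix.diagonal d * σ.permMatrix ℂ := by
  induction hG using Subgroup.closure_induction with
  | mem x hx =>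
      rcases hx with ⟨d, hd⟩ | ⟨σ, hσ⟩
      · exact ⟨d, 1, by rw [hd, perm_one', mul_one]⟩
      · exact ⟨1, σ, by rw [hσ]; rw [show Matrix.diagonal (1 : Fin n → ℂ) = 1 from Matrix.diagonal_one, one_mul]⟩
  | one => exact ⟨1, 1, by rw [perm_one', mul_one]; exact (Matrix.diagonal_one).symm⟩
  | mul x y hx hy ihx ihy =>
      obtain ⟨d1, σ, h1⟩ := ihx
      obtain ⟨d2, τ, h2⟩ := ihy
      refine ⟨d1 * (d2 ∘ σ), τ * σ, ?_⟩
      have : ((x * y : Matrix.unitaryGroup (Fin n) ℂ) : Matrix (Fin n) (Fin n) ℂ)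
          = (x : Matrix (Fin n) (Fin n) ℂ) * y := rfl
      rw [this, h1, h2, mul_assoc, ← mul_assoc (σ.permMatrix ℂ), perm_mul_diag',
        mul_assoc, perm_mul_perm', ← mul_assoc, Matrix.diagonal_mul_diagonal]
      rfl
  | inv x hx ih =>
      obtain ⟨d, σ, h1⟩ := ih
      refine ⟨(star ∘ d) ∘ ⇑σ⁻¹, σ⁻¹, ?_⟩
      have hcoe : ((x⁻¹ : Matrix.unitaryGroup (Fin n) ℂ) : Matrix (Fin n) (Fin n) ℂ)
          = star (x : Matrix (Fin n) (Fin n) ℂ) := by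
        rw [← Unitary.star_eq_inv]; rfl
      rw [hcoe, Matrix.star_eq_conjTranspose, h1, Matrix.conjTranspose_mul,
        perm_conjTranspose', Matrix.diagonal_conjTranspose, perm_mul_diag']
      rfl

lemma pow_form' {n : ℕ} (h : Matrix.unitaryGroup (Fin n) ℂ) (d : Fin n → ℂ)
    (σ : Equiv.Perm (Fin n))
    (hd : (h : Matrix (Fin n) (Fin n) ℂ) = Matrix.diagonal d * σ.permMatrix ℂ) (k : ℕ) :
    ∃ e : Fin n → ℂ,
      ((h ^ k : Matrix.unitaryGroup (Fin n) ℂ) : Matrix (Fin n) (Fin n) ℂ)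
        = Matrix.diagonal e * (σ ^ k).permMatrix ℂ := by
  induction k with
  | zero => exact ⟨1, by rw [pow_zero, pow_zero, perm_one', mul_one]; exact (Matrix.diagonal_one).symm⟩
  | succ k ih =>
      obtain ⟨e, he⟩ := ih
      refine ⟨e * (d ∘ ⇑(σ ^ k)), ?_⟩
      have hc : ((h ^ (k + 1) : Matrix.unitaryGroup (Fin n) ℂ) : Matrix (Fin n) (Fin n) ℂ)
          = ((h ^ k : Matrix.unitaryGroup (Fin n) ℂ) : Matrix (Fin n) (Fin n) ℂ)
            * (h : Matrix (Fin n) (Fin n) ℂ) := by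
        rw [pow_succ]; rfl
      rw [hc, he, hd, mul_assoc, ← mul_assoc ((σ ^ k).permMatrix ℂ), perm_mul_diag',
        mul_assoc, perm_mul_perm', ← mul_assoc, Matrix.diagonal_mul_diagonal, ← pow_succ']
      rfl

/-- If `n ≥ 2` and `h ∈ 𝔾ₙ` has infinite order, then `h ^ n!` is a
diagonal unitary matrix `diag (λ₁, …, λₙ)` with `h ^ n! ≠ 1`, `h ^ n!` of infinite order,
and some `λ_{j₀}` is not a root of unity. -/
theorem pow_factorial_diagonal_of_infinite_order (n : ℕ) (hn : 2 ≤ n)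
    (h : Matrix.unitaryGroup (Fin n) ℂ) (hG : h ∈ Gn n) (hord : ¬ IsOfFinOrder h) :
    ∃ d : Fin n → ℂ,
      ((h ^ n.factorial : Matrix.unitaryGroup (Fin n) ℂ) : Matrix (Fin n) (Fin n) ℂ) =
          Matrix.diagonal d ∧
        (∀ i, ‖d i‖ = 1) ∧ h ^ n.factorial ≠ 1 ∧ ¬ IsOfFinOrder (h ^ n.factorial) ∧
        ∃ j₀ : Fin n, ∀ m : ℕ, 0 < m → d j₀ ^ m ≠ 1 := by
  obtain ⟨d, σ, hd⟩ := Gn_form h hG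
  obtain ⟨e, he⟩ := pow_form' h d σ hd n.factorial
  have hσ : σ ^ n.factorial = 1 := by
    have h2 : σ ^ Fintype.card (Equiv.Perm (Fin n)) = 1 := pow_card_eq_one
    rwa [Fintype.card_perm, Fintype.card_fin] at h2
  rw [hσ, perm_one', mul_one] at he
  -- unit norms
  have hmem := (h ^ n.factorial).2
  rw [Matrix.mem_unitaryGroup_iff'] at hmem
  rw [he, Matrix.star_eq_conjTranspose, Matrix.diagonal_conjTranspose,
    Matrix.diagonal_mul_diagonal, ← Matrix.diagonal_one] at hmem
  have hunit : ∀ i, star (e i) * e i = 1 := fun i =>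
    congrFun (Matrix.diagonal_injective hmem) i
  have hnorm : ∀ i, ‖e i‖ = 1 := by
    intro i
    have h1 : Complex.normSq (e i) = 1 := by
      have := hunit i
      rw [Complex.star_def, mul_comm, Complex.mul_conj] at this
      exact_mod_cast this
    rw [Complex.norm_def, h1, Real.sqrt_one]
  have hfact : n.factorial ≠ 0 := Nat.factorial_ne_zero n
  have hinf : ¬ IsOfFinOrder (h ^ n.factorial) := by
    intro hfin
    exact hord (hfin.of_pow hfact)
  have hne : h ^ n.factorial ≠ 1 := by
    intro h1
    exact hinf (h1 ▸ IsOfFinOrder.one)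
  refine ⟨e, he, hnorm, hne, hinf, ?_⟩
  by_contra hcon
  push_neg at hcon
  choose m hm hm1 using hcon
  set M : ℕ := ∏ i, m i with hM
  have hMpos : 0 < M := Finset.prod_pos fun i _ => hm i
  have heM : ∀ i, e i ^ M = 1 := by
    intro i
    obtain ⟨c, hc⟩ := Finset.dvd_prod_of_mem m (Finset.mem_univ i)
    rw [hM, hc, pow_mul, hm1 i, one_pow]
  have hpow : (h ^ n.factorial) ^ M = 1 := by
    apply Subtype.ext
    have hcoe : (((h ^ n.factorial) ^ M : Matrix.unitaryGroup (Fin n) ℂ) :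
        Matrix (Fin n) (Fin n) ℂ)
        = ((h ^ n.factorial : Matrix.unitaryGroup (Fin n) ℂ) :
            Matrix (Fin n) (Fin n) ℂ) ^ M := by
      induction M with
      | zero => rfl
      | succ k ih => rw [pow_succ, pow_succ, ← ih]; rfl
    rw [hcoe, he, Matrix.diagonal_pow]
    have : (e ^ M) = 1 := funext fun i => heM i
    rw [this]
    exact Matrix.diagonal_one
  exact hinf (isOfFinOrder_iff_pow_eq_one.mpr ⟨M, hMpos, hpow⟩)

end
end
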